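/- arXiv:0708.3901 — 7 statements merged into one kernel-verified Lean document; each statement's English description precedes it below -/
import Mathlib

section
/- Let f : Y → X be a set map, let F ⊆ Y × Y satisfy the properness axiom, and put E := (f × f)(F). The following are equivalent: (i) f is locally proper for F; (ii) the restrictions of f to the left support F·Y and to the right support Y·F are proper maps; (iii) for every finite subset S ⊆ X, the sets f⁻¹(S)·F and F·f⁻¹(S) are finite. -/
open Set

universe u v w

/-- `E ⊆ X × X` satisfies the properness axiom: for every finite `K ⊆ X`,
the sets `{e ∈ E | e.1 ∈ K}` and `{e ∈ E | e.2 ∈ K}` are finite. -/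
def ProperAx {X : Type u} (E : Set (X × X)) : Prop :=
  ∀ K : Set X, K.Finite → {e ∈ E | e.1 ∈ K}.Finite ∧ {e ∈ E | e.2 ∈ K}.Finite

/-- Composition of relations: `E ∘ E' = {(x, x'') : ∃ x', (x, x') ∈ E ∧ (x', x'') ∈ E'}`. -/
def rcomp {X : Type u} (E E' : Set (X × X)) : Set (X × X) :=
  {p | ∃ x', (p.1, x') ∈ E ∧ (x', p.2) ∈ E'}

/-- Transpose of a relation. -/
def rtrans {X : Type u} (E : Set (X × X)) : Set (X × X) :=
  {p | (p.2, p.1) ∈ E}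

/-- Local unit over `S`: the diagonal `{(x, x) : x ∈ S}`. -/
def runit {X : Type u} (S : Set X) : Set (X × X) :=
  {p | p.1 ∈ S ∧ p.1 = p.2}

/-- A set map is proper if the preimage of every finite subset is finite. -/
def ProperMap {Y : Type u} {X : Type v} (f : Y → X) : Prop :=
  ∀ K : Set X, K.Finite → (f ⁻¹' K).Finite

/-- `f` is locally proper for `F ⊆ Y × Y`: `(f × f)(F)` satisfies the properness
axiom and the restriction of `f × f` to `F` is a proper map into `X × X`. -/
def LocProperFor {Y : Type u} {X : Type v} (f : Y → X) (F : Set (Y × Y)) : Prop :=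
  ProperAx (Prod.map f f '' F) ∧
  ∀ K : Set (X × X), K.Finite → {p ∈ F | Prod.map f f p ∈ K}.Finite

/-- A coarse structure on `X`. -/
structure CoarseStructure (X : Type u) where
  ents : Set (Set (X × X))
  proper : ∀ E ∈ ents, ProperAx E
  union_mem : ∀ E ∈ ents, ∀ E' ∈ ents, E ∪ E' ∈ ents
  comp_mem : ∀ E ∈ ents, ∀ E' ∈ ents, rcomp E E' ∈ ents
  trans_mem : ∀ E ∈ ents, rtrans E ∈ ents
  subset_mem : ∀ E ∈ ents, ∀ E' ⊆ E, E' ∈ ents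
  singleton_mem : ∀ x : X, ({(x, x)} : Set (X × X)) ∈ ents

/-- A coarse map: locally proper for every entourage of the domain, and
preserves entourages. -/
def IsCoarseMap {Y : Type u} {X : Type v} (CY : CoarseStructure Y) (CX : CoarseStructure X)
    (f : Y → X) : Prop :=
  ∀ F ∈ CY.ents, LocProperFor f F ∧ Prod.map f f '' F ∈ CX.ents

/-- `(f × f')(F) = {(f y, f' y') : (y, y') ∈ F}`. -/
def prodImage {Y : Type u} {X : Type v} (f f' : Y → X) (F : Set (Y × Y)) : Set (X × X) :=
  (fun p => (f p.1, f' p.2)) '' F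

/-- Coarse maps `f, f'` are close if `(f × f')(F)` is an entourage of the codomain
for every entourage `F` of the domain. -/
def Close {Y : Type u} {X : Type v} (CY : CoarseStructure Y) (CX : CoarseStructure X)
    (f f' : Y → X) : Prop :=
  ∀ F ∈ CY.ents, prodImage f f' F ∈ CX.ents

/-- Left support `F·Y`. -/
def leftSupp {Y : Type u} (F : Set (Y × Y)) : Set Y := Prod.fst '' F

/-- Right support `Y·F`. -/
def rightSupp {Y : Type u} (F : Set (Y × Y)) : Set Y := Prod.snd '' F

/-- Left `F`-neighbourhood `F·S`. -/
def leftNbhd {Y : Type u} (F : Set (Y × Y)) (S : Set Y) : Set Y := {y | ∃ y' ∈ S, (y, y') ∈ F}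

/-- Right `F`-neighbourhood `S·F`. -/
def rightNbhd {Y : Type u} (S : Set Y) (F : Set (Y × Y)) : Set Y := {y' | ∃ y ∈ S, (y, y') ∈ F}

/-- For a set map `f : Y → X` and `F ⊆ Y × Y` satisfying the properness axiom,
local properness for `F` is equivalent to: (ii) the restrictions of `f` to the left
and right supports of `F` are proper; and to (iii) `f⁻¹(S)·F` and `F·f⁻¹(S)` are
finite for every finite `S ⊆ X`. -/
theorem stmt2 {Y : Type u} {X : Type v} (f : Y → X) (F : Set (Y × Y)) (hF : ProperAx F) :
    (LocProperFor f F ↔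
      ∀ K : Set X, K.Finite →
        {y ∈ leftSupp F | f y ∈ K}.Finite ∧ {y ∈ rightSupp F | f y ∈ K}.Finite) ∧
    (LocProperFor f F ↔
      ∀ S : Set X, S.Finite →
        (rightNbhd (f ⁻¹' S) F).Finite ∧ (leftNbhd F (f ⁻¹' S)).Finite) := by
  -- (i) → (iii)
  have h1 : LocProperFor f F →
      ∀ S : Set X, S.Finite →
        (rightNbhd (f ⁻¹' S) F).Finite ∧ (leftNbhd F (f ⁻¹' S)).Finite := by
    rintro ⟨hE, hP⟩ S hS
    constructor
    · -- rightNbhd (f ⁻¹' S) F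
      have hT : (Prod.snd '' {e ∈ Prod.map f f '' F | e.1 ∈ S}).Finite :=
        ((hE S hS).1).image Prod.snd
      have hPfin := hP (S ×ˢ (Prod.snd '' {e ∈ Prod.map f f '' F | e.1 ∈ S})) (hS.prod hT)
      refine (hPfin.image Prod.snd).subset ?_
      rintro y' ⟨y, hy, hyF⟩
      refine ⟨(y, y'), ⟨hyF, ?_, ?_⟩, rfl⟩
      · exact hy
      · exact ⟨(f y, f y'), ⟨⟨(y, y'), hyF, rfl⟩, hy⟩, rfl⟩
    · -- leftNbhd F (f ⁻¹' S)
      have hT : (Prod.fst '' {e ∈ Prod.map f f '' F | e.2 ∈ S}).Finite :=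
        ((hE S hS).2).image Prod.fst
      have hPfin := hP ((Prod.fst '' {e ∈ Prod.map f f '' F | e.2 ∈ S}) ×ˢ S) (hT.prod hS)
      refine (hPfin.image Prod.fst).subset ?_
      rintro y ⟨y', hy', hyF⟩
      refine ⟨(y, y'), ⟨hyF, ?_, ?_⟩, rfl⟩
      · exact ⟨(f y, f y'), ⟨⟨(y, y'), hyF, rfl⟩, hy'⟩, rfl⟩
      · exact hy'
  -- (iii) → (ii)
  have h2 : (∀ S : Set X, S.Finite →
        (rightNbhd (f ⁻¹' S) F).Finite ∧ (leftNbhd F (f ⁻¹' S)).Finite) →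
      ∀ K : Set X, K.Finite →
        {y ∈ leftSupp F | f y ∈ K}.Finite ∧ {y ∈ rightSupp F | f y ∈ K}.Finite := by
    intro h K hK
    obtain ⟨hR, hL⟩ := h K hK
    constructor
    · refine (((hF _ hR).2).image Prod.fst).subset ?_
      rintro y ⟨⟨⟨y1, y2⟩, hp, rfl⟩, hfy⟩
      exact ⟨(y1, y2), ⟨hp, ⟨y1, hfy, hp⟩⟩, rfl⟩
    · refine (((hF _ hL).1).image Prod.snd).subset ?_
      rintro y ⟨⟨⟨y1, y2⟩, hp, rfl⟩, hfy⟩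
      exact ⟨(y1, y2), ⟨hp, ⟨y2, hfy, hp⟩⟩, rfl⟩
  -- (ii) → (i)
  have h3 : (∀ K : Set X, K.Finite →
        {y ∈ leftSupp F | f y ∈ K}.Finite ∧ {y ∈ rightSupp F | f y ∈ K}.Finite) →
      LocProperFor f F := by
    intro h
    constructor
    · intro K hK
      obtain ⟨hA, hB⟩ := h K hK
      constructor
      · refine (((hF _ hA).1).image (Prod.map f f)).subset ?_
        rintro e ⟨⟨⟨y1, y2⟩, hp, rfl⟩, he⟩
        exact ⟨(y1, y2), ⟨hp, ⟨⟨(y1, y2), hp, rfl⟩, he⟩⟩, rfl⟩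
      · refine (((hF _ hB).2).image (Prod.map f f)).subset ?_
        rintro e ⟨⟨⟨y1, y2⟩, hp, rfl⟩, he⟩
        exact ⟨(y1, y2), ⟨hp, ⟨⟨(y1, y2), hp, rfl⟩, he⟩⟩, rfl⟩
    · intro K hK
      have hA := (h (Prod.fst '' K) (hK.image Prod.fst)).1
      refine ((hF _ hA).1).subset ?_
      rintro ⟨y1, y2⟩ ⟨hp, he⟩
      exact ⟨hp, ⟨⟨(y1, y2), hp, rfl⟩, ⟨(f y1, f y2), he, rfl⟩⟩⟩
  exact ⟨⟨fun h => h2 (h1 h), h3⟩, ⟨h1, fun h => h3 (h2 h)⟩⟩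
end

section
/- Consider set maps g : Z → Y and f : Y → X, let G ⊆ Z × Z satisfy the properness axiom, and put F := (g × g)(G). Then: (i) if g is locally proper for G and f is locally proper for F, then f ∘ g is locally proper for G; (ii) if f ∘ g is locally proper for G, then g is locally proper for G; (iii) if f ∘ g is locally proper for G, then f is locally proper for F. -/
open Set

universe u v w

/-- Local properness and composition: with `F := (g × g)(G)`, (i) if `g` is locally
proper for `G` and `f` for `F`, then `f ∘ g` is locally proper for `G`; (ii) if
`f ∘ g` is locally proper for `G` then so is `g`; (iii) if `f ∘ g` is locally
proper for `G` then `f` is locally proper for `F`. -/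
theorem stmt6 {Z : Type u} {Y : Type v} {X : Type w} (g : Z → Y) (f : Y → X)
    (G : Set (Z × Z)) (hG : ProperAx G) :
    (LocProperFor g G → LocProperFor f (Prod.map g g '' G) → LocProperFor (f ∘ g) G) ∧
    (LocProperFor (f ∘ g) G → LocProperFor g G) ∧
    (LocProperFor (f ∘ g) G → LocProperFor f (Prod.map g g '' G)) := by
  have himg : Prod.map f f '' (Prod.map g g '' G) = Prod.map (f ∘ g) (f ∘ g) '' G := by
    rw [← Set.image_comp]; rfl
  refine ⟨?_, ?_, ?_⟩
  · rintro ⟨hg1, hg2⟩ ⟨hf1, hf2⟩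
    constructor
    · rw [← himg]; exact hf1
    · intro K hK
      have hK' := hf2 K hK
      apply (hg2 _ hK').subset
      rintro p ⟨hpG, hpK⟩
      exact ⟨hpG, ⟨p, hpG, rfl⟩, hpK⟩
  · rintro ⟨hfg1, hfg2⟩
    constructor
    · intro K hK
      constructor
      · obtain ⟨hD, -⟩ := hfg1 (f '' K) (hK.image f)
        have hT := hfg2 _ hD
        apply (hT.image (Prod.map g g)).subset
        rintro e ⟨⟨p, hpG, rfl⟩, he1⟩
        exact ⟨p, ⟨hpG, ⟨⟨p, hpG, rfl⟩, ⟨g p.1, he1, rfl⟩⟩⟩, rfl⟩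
      · obtain ⟨-, hD⟩ := hfg1 (f '' K) (hK.image f)
        have hT := hfg2 _ hD
        apply (hT.image (Prod.map g g)).subset
        rintro e ⟨⟨p, hpG, rfl⟩, he2⟩
        exact ⟨p, ⟨hpG, ⟨⟨p, hpG, rfl⟩, ⟨g p.2, he2, rfl⟩⟩⟩, rfl⟩
    · intro K hK
      apply (hfg2 (Prod.map f f '' K) (hK.image _)).subset
      rintro p ⟨hpG, hpK⟩
      exact ⟨hpG, ⟨Prod.map g g p, hpK, rfl⟩⟩
  · rintro ⟨hfg1, hfg2⟩
    constructor
    · rw [himg]; exact hfg1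
    · intro K hK
      apply ((hfg2 K hK).image (Prod.map g g)).subset
      rintro q ⟨⟨p, hpG, rfl⟩, hqK⟩
      exact ⟨p, ⟨hpG, hqK⟩, rfl⟩
end

section
/- Let J be a nonempty index set and (X_j)_{j ∈ J} a family of coarse spaces. Let P := Π_{j ∈ J} X_j be the product set, and let 𝓔_P be the collection of all E ⊆ P × P satisfying the properness axiom such that for every j ∈ J the projection π_j : P → X_j is locally proper for E and (π_j × π_j)(E) is an entourage of X_j. Then 𝓔_P is a coarse structure on P, each projection π_j is a coarse map, and for every coarse space Y and every family of coarse maps f_j : Y → X_j (j ∈ J), the induced map t : Y → P defined by t(y) := (f_j(y))_{j ∈ J} is a coarse map (and is the unique map with π_j ∘ t = f_j for all j). -/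
open Set

universe u v w

/-- The entourages of the product coarse space: sets satisfying the properness axiom
for which every projection is locally proper and preserves them. -/
def prodEnts {J : Type u} {X : J → Type v} (C : ∀ j, CoarseStructure (X j)) :
    Set (Set ((∀ j, X j) × (∀ j, X j))) :=
  {E | ProperAx E ∧ ∀ j : J,
    LocProperFor (fun p : (∀ i, X i) => p j) E ∧
    Prod.map (fun p : (∀ i, X i) => p j) (fun p : (∀ i, X i) => p j) '' E ∈ (C j).ents}

section Aux

variable {Y : Type u} {X : Type v}

lemma properAx_mono {E E' : Set (X × X)} (h : E' ⊆ E) (hE : ProperAx E) : ProperAx E' := by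
  intro K hK
  obtain ⟨h1, h2⟩ := hE K hK
  exact ⟨h1.subset fun e he => ⟨h he.1, he.2⟩, h2.subset fun e he => ⟨h he.1, he.2⟩⟩

lemma properAx_of_finite {E : Set (X × X)} (h : E.Finite) : ProperAx E :=
  fun _ _ => ⟨h.subset fun _ he => he.1, h.subset fun _ he => he.1⟩

lemma properAx_union {E E' : Set (X × X)} (hE : ProperAx E) (hE' : ProperAx E') :
    ProperAx (E ∪ E') := by
  intro K hK
  obtain ⟨h1, h2⟩ := hE K hK
  obtain ⟨h1', h2'⟩ := hE' K hK
  constructor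
  · refine (h1.union h1').subset ?_
    rintro e ⟨he | he, hk⟩
    exacts [Or.inl ⟨he, hk⟩, Or.inr ⟨he, hk⟩]
  · refine (h2.union h2').subset ?_
    rintro e ⟨he | he, hk⟩
    exacts [Or.inl ⟨he, hk⟩, Or.inr ⟨he, hk⟩]

lemma properAx_rcomp {E E' : Set (X × X)} (hE : ProperAx E) (hE' : ProperAx E') :
    ProperAx (rcomp E E') := by
  intro K hK
  constructor
  · obtain ⟨hA, -⟩ := hE K hK
    obtain ⟨hB, -⟩ := hE' _ (hA.image Prod.snd)
    refine ((hA.prod hB).image (fun q : (X × X) × (X × X) => (q.1.1, q.2.2))).subset ?_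
    rintro ⟨x, x''⟩ ⟨⟨x', hx1, hx2⟩, hxk⟩
    exact ⟨((x, x'), (x', x'')), ⟨⟨hx1, hxk⟩, hx2, ⟨(x, x'), ⟨hx1, hxk⟩, rfl⟩⟩, rfl⟩
  · obtain ⟨-, hA⟩ := hE' K hK
    obtain ⟨-, hB⟩ := hE _ (hA.image Prod.fst)
    refine ((hB.prod hA).image (fun q : (X × X) × (X × X) => (q.1.1, q.2.2))).subset ?_
    rintro ⟨x, x''⟩ ⟨⟨x', hx1, hx2⟩, hxk⟩
    exact ⟨((x, x'), (x', x'')), ⟨⟨hx1, ⟨(x', x''), ⟨hx2, hxk⟩, rfl⟩⟩, hx2, hxk⟩, rfl⟩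

lemma properAx_rtrans {E : Set (X × X)} (hE : ProperAx E) : ProperAx (rtrans E) := by
  intro K hK
  obtain ⟨h1, h2⟩ := hE K hK
  constructor
  · refine (h2.image Prod.swap).subset ?_
    rintro ⟨a, b⟩ ⟨he, hk⟩
    exact ⟨(b, a), ⟨he, hk⟩, rfl⟩
  · refine (h1.image Prod.swap).subset ?_
    rintro ⟨a, b⟩ ⟨he, hk⟩
    exact ⟨(b, a), ⟨he, hk⟩, rfl⟩

lemma image_rcomp_subset (f : Y → X) (E E' : Set (Y × Y)) :
    Prod.map f f '' rcomp E E' ⊆ rcomp (Prod.map f f '' E) (Prod.map f f '' E') := by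
  rintro _ ⟨⟨y, y''⟩, ⟨y', h1, h2⟩, rfl⟩
  exact ⟨f y', ⟨(y, y'), h1, rfl⟩, ⟨(y', y''), h2, rfl⟩⟩

lemma image_rtrans (f : Y → X) (E : Set (Y × Y)) :
    Prod.map f f '' rtrans E = rtrans (Prod.map f f '' E) := by
  ext p
  constructor
  · rintro ⟨⟨y, y'⟩, h, rfl⟩
    exact ⟨(y', y), h, rfl⟩
  · rintro ⟨⟨y, y'⟩, h, heq⟩
    have h1 : f y = p.2 := congrArg Prod.fst heq
    have h2 : f y' = p.1 := congrArg Prod.snd heq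
    refine ⟨(y', y), h, ?_⟩
    simp only [Prod.map]
    rw [h1, h2]

lemma locProperFor_mono {f : Y → X} {F F' : Set (Y × Y)} (h : F' ⊆ F)
    (hF : LocProperFor f F) : LocProperFor f F' := by
  refine ⟨properAx_mono (Set.image_mono h) hF.1, fun K hK => ?_⟩
  exact (hF.2 K hK).subset fun p hp => ⟨h hp.1, hp.2⟩

lemma locProperFor_of_finite {f : Y → X} {F : Set (Y × Y)} (h : F.Finite) :
    LocProperFor f F :=
  ⟨properAx_of_finite (h.image _), fun _ _ => h.subset fun _ hp => hp.1⟩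

lemma locProperFor_union {f : Y → X} {F F' : Set (Y × Y)}
    (hF : LocProperFor f F) (hF' : LocProperFor f F') : LocProperFor f (F ∪ F') := by
  constructor
  · rw [Set.image_union]
    exact properAx_union hF.1 hF'.1
  · intro K hK
    refine ((hF.2 K hK).union (hF'.2 K hK)).subset ?_
    rintro p ⟨hp | hp, hk⟩
    exacts [Or.inl ⟨hp, hk⟩, Or.inr ⟨hp, hk⟩]

lemma locProperFor_rcomp {f : Y → X} {E E' : Set (Y × Y)}
    (hE : LocProperFor f E) (hE' : LocProperFor f E') : LocProperFor f (rcomp E E') := by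
  constructor
  · exact properAx_mono (image_rcomp_subset f E E') (properAx_rcomp hE.1 hE'.1)
  · intro K hK
    have hK1 : (Prod.fst '' K).Finite := hK.image _
    have hK2 : (Prod.snd '' K).Finite := hK.image _
    obtain ⟨hfin, -⟩ := hE.1 (Prod.fst '' K) hK1
    set L1 := Prod.snd '' {e ∈ Prod.map f f '' E | e.1 ∈ Prod.fst '' K} with hL1def
    have hL1 : L1.Finite := hfin.image _
    have hA := hE.2 ((Prod.fst '' K) ×ˢ L1) (hK1.prod hL1)
    have hB := hE'.2 (L1 ×ˢ (Prod.snd '' K)) (hL1.prod hK2)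
    refine ((hA.prod hB).image (fun q : (Y × Y) × (Y × Y) => (q.1.1, q.2.2))).subset ?_
    rintro ⟨y, y''⟩ ⟨⟨y', h1, h2⟩, hk⟩
    have hfy : f y ∈ Prod.fst '' K := ⟨_, hk, rfl⟩
    have hfy'' : f y'' ∈ Prod.snd '' K := ⟨_, hk, rfl⟩
    have hfy' : f y' ∈ L1 := ⟨(f y, f y'), ⟨⟨(y, y'), h1, rfl⟩, hfy⟩, rfl⟩
    exact ⟨((y, y'), (y', y'')), ⟨⟨h1, hfy, hfy'⟩, h2, hfy', hfy''⟩, rfl⟩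

lemma locProperFor_rtrans {f : Y → X} {E : Set (Y × Y)}
    (hE : LocProperFor f E) : LocProperFor f (rtrans E) := by
  constructor
  · rw [image_rtrans]
    exact properAx_rtrans hE.1
  · intro K hK
    refine ((hE.2 (Prod.swap '' K) (hK.image _)).image Prod.swap).subset ?_
    rintro ⟨a, b⟩ ⟨he, hk⟩
    exact ⟨(b, a), ⟨he, ⟨_, hk, rfl⟩⟩, rfl⟩

end Aux

section Induced

variable {J : Type u} {X : J → Type v} {Y : Type w}

lemma properAx_image_induced (j0 : J) (f : ∀ j, Y → X j) (F : Set (Y × Y))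
    (h1 : ProperAx (Prod.map (f j0) (f j0) '' F))
    (h2 : ∀ K : Set (X j0 × X j0), K.Finite →
      {p ∈ F | Prod.map (f j0) (f j0) p ∈ K}.Finite) :
    ProperAx (Prod.map (fun y j => f j y) (fun y j => f j y) '' F) := by
  intro K hK
  constructor
  · have hK0 : ((fun p : ∀ j, X j => p j0) '' K).Finite := hK.image _
    obtain ⟨hfin, -⟩ := h1 _ hK0
    set L0 := Prod.snd '' {e ∈ Prod.map (f j0) (f j0) '' F |
      e.1 ∈ (fun p : ∀ j, X j => p j0) '' K} with hL0def
    have hL0 : L0.Finite := hfin.image _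
    have hF0 := h2 (((fun p : ∀ j, X j => p j0) '' K) ×ˢ L0) (hK0.prod hL0)
    refine (hF0.image (Prod.map (fun y j => f j y) (fun y j => f j y))).subset ?_
    rintro _ ⟨⟨⟨y, y'⟩, hm, rfl⟩, hk⟩
    have hy0 : f j0 y ∈ (fun p : ∀ j, X j => p j0) '' K := ⟨_, hk, rfl⟩
    have hy0' : f j0 y' ∈ L0 := ⟨(f j0 y, f j0 y'), ⟨⟨(y, y'), hm, rfl⟩, hy0⟩, rfl⟩
    exact ⟨(y, y'), ⟨hm, hy0, hy0'⟩, rfl⟩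
  · have hK0 : ((fun p : ∀ j, X j => p j0) '' K).Finite := hK.image _
    obtain ⟨-, hfin⟩ := h1 _ hK0
    set M0 := Prod.fst '' {e ∈ Prod.map (f j0) (f j0) '' F |
      e.2 ∈ (fun p : ∀ j, X j => p j0) '' K} with hM0def
    have hM0 : M0.Finite := hfin.image _
    have hF0 := h2 (M0 ×ˢ ((fun p : ∀ j, X j => p j0) '' K)) (hM0.prod hK0)
    refine (hF0.image (Prod.map (fun y j => f j y) (fun y j => f j y))).subset ?_
    rintro _ ⟨⟨⟨y, y'⟩, hm, rfl⟩, hk⟩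
    have hy0' : f j0 y' ∈ (fun p : ∀ j, X j => p j0) '' K := ⟨_, hk, rfl⟩
    have hy0 : f j0 y ∈ M0 := ⟨(f j0 y, f j0 y'), ⟨⟨(y, y'), hm, rfl⟩, hy0'⟩, rfl⟩
    exact ⟨(y, y'), ⟨hm, hy0, hy0'⟩, rfl⟩

end Induced

/-- For a nonempty family of coarse spaces, the product set with `prodEnts` is a
coarse structure, the projections are coarse maps, and the induced map from any
cone of coarse maps is the unique coarse map commuting with the projections. -/
theorem stmt14 {J : Type u} [Nonempty J] {X : J → Type v}
    (C : ∀ j, CoarseStructure (X j)) :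
    ∃ CP : CoarseStructure (∀ j, X j), CP.ents = prodEnts C ∧
      (∀ j : J, IsCoarseMap CP (C j) (fun p => p j)) ∧
      ∀ (Y : Type w) (CY : CoarseStructure Y) (f : ∀ j, Y → X j),
        (∀ j, IsCoarseMap CY (C j) (f j)) →
        IsCoarseMap CY CP (fun y j => f j y) ∧
        ∀ t' : Y → (∀ j, X j), (∀ j, (fun p : (∀ i, X i) => p j) ∘ t' = f j) →
          t' = fun y j => f j y := by
  classical
  refine ⟨⟨prodEnts C, fun E hE => hE.1, ?_, ?_, ?_, ?_, ?_⟩, rfl, fun j E hE => hE.2 j, ?_⟩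
  · -- union
    intro E hE E' hE'
    refine ⟨properAx_union hE.1 hE'.1, fun j => ⟨locProperFor_union (hE.2 j).1 (hE'.2 j).1, ?_⟩⟩
    rw [Set.image_union]
    exact (C j).union_mem _ (hE.2 j).2 _ (hE'.2 j).2
  · -- comp
    intro E hE E' hE'
    refine ⟨properAx_rcomp hE.1 hE'.1, fun j => ⟨locProperFor_rcomp (hE.2 j).1 (hE'.2 j).1, ?_⟩⟩
    exact (C j).subset_mem _ ((C j).comp_mem _ (hE.2 j).2 _ (hE'.2 j).2) _
      (image_rcomp_subset _ _ _)
  · -- trans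
    intro E hE
    refine ⟨properAx_rtrans hE.1, fun j => ⟨locProperFor_rtrans (hE.2 j).1, ?_⟩⟩
    rw [image_rtrans]
    exact (C j).trans_mem _ (hE.2 j).2
  · -- subset
    intro E hE E' hsub
    exact ⟨properAx_mono hsub hE.1, fun j => ⟨locProperFor_mono hsub (hE.2 j).1,
      (C j).subset_mem _ (hE.2 j).2 _ (Set.image_mono hsub)⟩⟩
  · -- singletons
    intro x
    refine ⟨properAx_of_finite (Set.finite_singleton _), fun j =>
      ⟨locProperFor_of_finite (Set.finite_singleton _), ?_⟩⟩
    rw [Set.image_singleton]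
    exact (C j).singleton_mem (x j)
  · -- cone
    intro Y CY f hf
    obtain ⟨j0⟩ := ‹Nonempty J›
    constructor
    · intro F hF
      have hPA : ProperAx (Prod.map (fun y j => f j y) (fun y j => f j y) '' F) :=
        properAx_image_induced j0 f F ((hf j0 F hF).1.1) ((hf j0 F hF).1.2)
      have himg : ∀ j : J,
          Prod.map (fun p : ∀ i, X i => p j) (fun p : ∀ i, X i => p j) ''
            (Prod.map (fun y j => f j y) (fun y j => f j y) '' F) =
          Prod.map (f j) (f j) '' F := by
        intro j
        rw [← Set.image_comp]
        rfl
      refine ⟨⟨hPA, ?_⟩, hPA, ?_⟩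
      · -- locally proper for t
        intro K hK
        have hK1 : ((fun p : ∀ j, X j => p j0) '' (Prod.fst '' K)).Finite :=
          (hK.image _).image _
        have hK2 : ((fun p : ∀ j, X j => p j0) '' (Prod.snd '' K)).Finite :=
          (hK.image _).image _
        refine ((hf j0 F hF).1.2 _ (hK1.prod hK2)).subset ?_
        rintro ⟨y, y'⟩ ⟨hm, hk⟩
        exact ⟨hm, ⟨_, ⟨_, hk, rfl⟩, rfl⟩, ⟨_, ⟨_, hk, rfl⟩, rfl⟩⟩
      · -- image is a product entourage
        intro j
        refine ⟨⟨?_, ?_⟩, ?_⟩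
        · rw [himg j]
          exact (C j).proper _ (hf j F hF).2
        · intro K hK
          refine (((hf j F hF).1.2 K hK).image
            (Prod.map (fun y j => f j y) (fun y j => f j y))).subset ?_
          rintro _ ⟨⟨⟨y, y'⟩, hm, rfl⟩, hk⟩
          exact ⟨(y, y'), ⟨hm, hk⟩, rfl⟩
        · rw [himg j]
          exact (hf j F hF).2
    · intro t' ht'
      funext y
      funext j
      exact congrFun (ht' j) y
end

section
/- Let J be a nonempty index set, (X_j)_{j ∈ J} coarse spaces, and P := Π_{j ∈ J} X_j the product coarse space whose entourages are the E ⊆ P × P satisfying the properness axiom such that for every j the projection π_j is locally proper for E and (π_j × π_j)(E) is an entourage of X_j. Let Y be a coarse space, f_j : Y → X_j coarse maps, and t : Y → P the induced coarse map t(y) := (f_j(y))_j. If t' : Y → P is any coarse map such that π_j ∘ t' is close to f_j for every j ∈ J, then t' is close to t. (Hence P with the classes of the projections is a product in the coarse category.) -/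
open Set

universe u v w

lemma fin_diag_aux {Y : Type u} {Z : Type v} {g : Y → Z} {S : Set Y}
    (h : LocProperFor g (runit S)) {K : Set Z} (hK : K.Finite) :
    {y ∈ S | g y ∈ K}.Finite := by
  have hB := h.2 (K ×ˢ K) (hK.prod hK)
  have hsub : {y ∈ S | g y ∈ K} ⊆
      Prod.fst '' {p ∈ runit S | Prod.map g g p ∈ K ×ˢ K} := by
    rintro y ⟨hyS, hyK⟩
    exact ⟨(y, y), ⟨⟨hyS, rfl⟩, ⟨hyK, hyK⟩⟩, rfl⟩
  exact (hB.image _).subset hsub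

lemma runit_leftSupp_mem {Y : Type u} (CY : CoarseStructure Y) {F : Set (Y × Y)}
    (hF : F ∈ CY.ents) : runit (leftSupp F) ∈ CY.ents := by
  apply CY.subset_mem _ (CY.comp_mem F hF _ (CY.trans_mem F hF))
  rintro ⟨a, b⟩ ⟨⟨q, hq, hq1⟩, heq⟩
  simp only at hq1
  refine ⟨q.2, ?_, ?_⟩
  · rw [← hq1]; exact hq
  · show (b, q.2) ∈ F
    simp only at heq
    rw [← heq, ← hq1]; exact hq

lemma runit_rightSupp_mem {Y : Type u} (CY : CoarseStructure Y) {F : Set (Y × Y)}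
    (hF : F ∈ CY.ents) : runit (rightSupp F) ∈ CY.ents := by
  apply CY.subset_mem _ (CY.comp_mem _ (CY.trans_mem F hF) F hF)
  rintro ⟨a, b⟩ ⟨⟨q, hq, hq2⟩, heq⟩
  simp only at hq2
  refine ⟨q.1, ?_, ?_⟩
  · show (q.1, a) ∈ F
    rw [← hq2]; exact hq
  · simp only at heq
    rw [← heq]
    show (q.1, a) ∈ F
    rw [← hq2]; exact hq

lemma fin_proj_aux {J : Type u} {X : J → Type v} (C : ∀ j, CoarseStructure (X j))
    (CP : CoarseStructure (∀ j, X j)) (hP : CP.ents = prodEnts C)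
    {Y : Type w} (CY : CoarseStructure Y) {g : Y → ∀ j, X j}
    (hg : IsCoarseMap CY CP g) {S : Set Y} (hS : runit S ∈ CY.ents)
    (j : J) {K : Set (X j)} (hK : K.Finite) :
    {y ∈ S | g y j ∈ K}.Finite := by
  obtain ⟨hlp, hmem⟩ := hg (runit S) hS
  rw [hP] at hmem
  obtain ⟨-, hj⟩ := hmem
  have hjlp := ((hj j).1).2 (K ×ˢ K) (hK.prod hK)
  set A := {q ∈ Prod.map g g '' runit S |
    Prod.map (fun p : (∀ i, X i) => p j) (fun p : (∀ i, X i) => p j) q ∈ K ×ˢ K} with hA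
  have hK2 : (Prod.fst '' A).Finite := hjlp.image _
  have hB := hlp.2 ((Prod.fst '' A) ×ˢ (Prod.fst '' A)) (hK2.prod hK2)
  apply (hB.image Prod.fst).subset
  rintro y ⟨hyS, hyK⟩
  have hqA : (g y, g y) ∈ A := ⟨⟨(y, y), ⟨hyS, rfl⟩, rfl⟩, ⟨hyK, hyK⟩⟩
  have hgy : g y ∈ Prod.fst '' A := ⟨(g y, g y), hqA, rfl⟩
  exact ⟨(y, y), ⟨⟨hyS, rfl⟩, ⟨hgy, hgy⟩⟩, rfl⟩

/-- In the coarse category the product is given by the product coarse space: if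
`t'` is any coarse map into the product whose compositions with the projections
are close to the given maps `f j`, then `t'` is close to the induced map. -/
theorem stmt15 {J : Type u} [Nonempty J] {X : J → Type v}
    (C : ∀ j, CoarseStructure (X j))
    (CP : CoarseStructure (∀ j, X j)) (hP : CP.ents = prodEnts C)
    {Y : Type w} (CY : CoarseStructure Y) (f : ∀ j, Y → X j)
    (hf : ∀ j, IsCoarseMap CY (C j) (f j))
    (ht : IsCoarseMap CY CP (fun y j => f j y))
    (t' : Y → ∀ j, X j) (ht' : IsCoarseMap CY CP t')
    (hclose : ∀ j, Close CY (C j) ((fun p : (∀ i, X i) => p j) ∘ t') (f j)) :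
    Close CY CP t' (fun y j => f j y) := by
  intro F hF
  set tm : Y → ∀ j, X j := fun y j => f j y with htm
  set E : Set ((∀ j, X j) × (∀ j, X j)) := prodImage t' tm F with hE
  have hSL : runit (leftSupp F) ∈ CY.ents := runit_leftSupp_mem CY hF
  have hSR : runit (rightSupp F) ∈ CY.ents := runit_rightSupp_mem CY hF
  rw [hP]
  refine ⟨?_, fun j => ⟨⟨?_, ?_⟩, ?_⟩⟩
  · -- ProperAx E
    intro K hK
    constructor
    · have hSK : {y ∈ leftSupp F | t' y ∈ K}.Finite :=
        fin_diag_aux (ht' _ hSL).1 hK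
      have hF2 := (CY.proper F hF _ hSK).1
      apply (hF2.image (fun q : Y × Y => (t' q.1, tm q.2))).subset
      rintro e ⟨⟨q, hq, rfl⟩, heK⟩
      exact ⟨q, ⟨hq, ⟨⟨q, hq, rfl⟩, heK⟩⟩, rfl⟩
    · have hSK : {y ∈ rightSupp F | tm y ∈ K}.Finite :=
        fin_diag_aux (ht _ hSR).1 hK
      have hF2 := (CY.proper F hF _ hSK).2
      apply (hF2.image (fun q : Y × Y => (t' q.1, tm q.2))).subset
      rintro e ⟨⟨q, hq, rfl⟩, heK⟩
      exact ⟨q, ⟨hq, ⟨⟨q, hq, rfl⟩, heK⟩⟩, rfl⟩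
  · -- ProperAx of projection image
    have himg : Prod.map (fun p : (∀ i, X i) => p j) (fun p : (∀ i, X i) => p j) '' E
        = prodImage ((fun p : (∀ i, X i) => p j) ∘ t') (f j) F := by
      rw [hE, prodImage, prodImage, ← image_comp]
      rfl
    rw [himg]
    exact (C j).proper _ (hclose j F hF)
  · -- local properness of projection on E
    intro K hK
    have hK1 : (Prod.fst '' K).Finite := hK.image _
    have hSj : {y ∈ leftSupp F | t' y j ∈ Prod.fst '' K}.Finite :=
      fin_proj_aux C CP hP CY ht' hSL j hK1
    have hF1 := (CY.proper F hF _ hSj).1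
    apply (hF1.image (fun q : Y × Y => (t' q.1, tm q.2))).subset
    rintro p ⟨⟨q, hq, rfl⟩, hpK⟩
    exact ⟨q, ⟨hq, ⟨⟨q, hq, rfl⟩, ⟨_, hpK, rfl⟩⟩⟩, rfl⟩
  · -- projection image is an entourage
    have himg : Prod.map (fun p : (∀ i, X i) => p j) (fun p : (∀ i, X i) => p j) '' E
        = prodImage ((fun p : (∀ i, X i) => p j) ∘ t') (f j) F := by
      rw [hE, prodImage, prodImage, ← image_comp]
      rfl
    rw [himg]
    exact hclose j F hF
end

section
/- Let f, f' : Y → X be coarse maps between coarse spaces. Define Eq := {y ∈ Y : {(f y, f' y)} is an entourage of X} and equip Eq with the collection 𝓔_Eq of all F ⊆ Eq × Eq such that F is an entourage of Y and (f × f')(F) := {(f y, f' y') : (y, y') ∈ F} is an entourage of X. Then: (a) 𝓔_Eq is a coarse structure on Eq and the inclusion ι : Eq → Y is a coarse map; (b) for every coarse space Z and every coarse map g : Z → Y such that f ∘ g is close to f' ∘ g, the image of g is contained in Eq, and the corestriction g̃ : Z → Eq (equal to g as a set map) is a coarse map with ι ∘ g̃ = g; (c) any coarse map g̃' : Z → Eq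 with ι ∘ g̃' close to g is close to g̃. (Hence Eq is the equalizer of the closeness classes of f and f' in the coarse category.) -/
open Set

universe u v w

/-- The underlying set of the equalizer of `f` and `f'`: points `y` with `f y`
connected to `f' y`. -/
abbrev EqSet {Y : Type u} {X : Type v} (CX : CoarseStructure X) (f f' : Y → X) : Type u :=
  {y : Y // ({(f y, f' y)} : Set (X × X)) ∈ CX.ents}
lemma finite_sep {α β : Type*} (h : α → β) (hi : Function.Injective h)
    (F : Set α) {K : Set β} (hK : K.Finite) : {p ∈ F | h p ∈ K}.Finite :=
  (hK.preimage hi.injOn).subset fun _ hp => hp.2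

lemma properAx_of_image {α : Type u} {β : Type v} (h : α → β) (hi : Function.Injective h)
    {E : Set (α × α)} (hP : ProperAx (Prod.map h h '' E)) : ProperAx E := by
  intro K hK
  have h2 : Function.Injective (Prod.map h h) := hi.prodMap hi
  constructor
  · refine Set.Finite.of_finite_image ?_ h2.injOn
    refine ((hP (h '' K) (hK.image h)).1).subset ?_
    rintro _ ⟨p, ⟨hpE, hpK⟩, rfl⟩
    exact ⟨⟨p, hpE, rfl⟩, ⟨p.1, hpK, rfl⟩⟩
  · refine Set.Finite.of_finite_image ?_ h2.injOn
    refine ((hP (h '' K) (hK.image h)).2).subset ?_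
    rintro _ ⟨p, ⟨hpE, hpK⟩, rfl⟩
    exact ⟨⟨p, hpE, rfl⟩, ⟨p.2, hpK, rfl⟩⟩

/-- The equalizer of close classes of coarse maps in the coarse category: (a) the
described collection is a coarse structure on `EqSet` and the inclusion is coarse;
(b) any coarse `g` with `f ∘ g` close to `f' ∘ g` lands in `EqSet` and corestricts
to a coarse map; (c) the corestriction is unique up to closeness. -/
theorem stmt16 {Y : Type u} {X : Type v} (CY : CoarseStructure Y) (CX : CoarseStructure X)
    (f f' : Y → X) (hf : IsCoarseMap CY CX f) (hf' : IsCoarseMap CY CX f') :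
    ∃ CE : CoarseStructure (EqSet CX f f'),
      CE.ents = {F : Set (EqSet CX f f' × EqSet CX f f') |
          (Prod.map (Subtype.val) (Subtype.val) '' F) ∈ CY.ents ∧
          ((fun p : EqSet CX f f' × EqSet CX f f' => (f p.1.val, f' p.2.val)) '' F)
            ∈ CX.ents} ∧
      IsCoarseMap CE CY (Subtype.val) ∧
      ∀ (Z : Type w) (CZ : CoarseStructure Z) (g : Z → Y),
        IsCoarseMap CZ CY g → Close CZ CX (f ∘ g) (f' ∘ g) →
          ∃ hmem : ∀ z, ({(f (g z), f' (g z))} : Set (X × X)) ∈ CX.ents,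
            IsCoarseMap CZ CE (fun z => ⟨g z, hmem z⟩) ∧
            (Subtype.val ∘ (fun z => (⟨g z, hmem z⟩ : EqSet CX f f')) = g) ∧
            ∀ g' : Z → EqSet CX f f', IsCoarseMap CZ CE g' →
              Close CZ CY (Subtype.val ∘ g') g →
              Close CZ CE g' (fun z => ⟨g z, hmem z⟩) := by
  classical
  have hι : Function.Injective (Subtype.val : EqSet CX f f' → Y) := Subtype.val_injective
  have hι2 : Function.Injective
      (Prod.map (Subtype.val : EqSet CX f f' → Y) Subtype.val) := hι.prodMap hι
  refine ⟨⟨{F : Set (EqSet CX f f' × EqSet CX f f') |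
          (Prod.map (Subtype.val) (Subtype.val) '' F) ∈ CY.ents ∧
          ((fun p : EqSet CX f f' × EqSet CX f f' => (f p.1.val, f' p.2.val)) '' F)
            ∈ CX.ents}, ?_, ?_, ?_, ?_, ?_, ?_⟩, rfl, ?_, ?_⟩
  · -- proper
    intro E hE
    exact properAx_of_image _ hι (CY.proper _ hE.1)
  · -- union
    intro E hE E' hE'
    constructor
    · rw [Set.image_union]; exact CY.union_mem _ hE.1 _ hE'.1
    · rw [Set.image_union]; exact CX.union_mem _ hE.2 _ hE'.2
  · -- comp
    intro E hE E' hE'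
    constructor
    · apply CY.subset_mem _ (CY.comp_mem _ hE.1 _ hE'.1)
      rintro _ ⟨p, ⟨m, h1, h2⟩, rfl⟩
      exact ⟨m.val, ⟨(p.1, m), h1, rfl⟩, ⟨(m, p.2), h2, rfl⟩⟩
    · apply CX.subset_mem _ (CX.comp_mem _ hE.2 _ ((hf' _ hE'.1).2))
      rintro _ ⟨p, ⟨m, h1, h2⟩, rfl⟩
      exact ⟨f' m.val, ⟨(p.1, m), h1, rfl⟩, ⟨(m.val, p.2.val), ⟨(m, p.2), h2, rfl⟩, rfl⟩⟩
  · -- trans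
    intro E hE
    constructor
    · apply CY.subset_mem _ (CY.trans_mem _ hE.1)
      rintro _ ⟨p, hp, rfl⟩
      exact ⟨(p.2, p.1), hp, rfl⟩
    · apply CX.subset_mem _ (CX.comp_mem _ (CX.trans_mem _ (hf _ hE.1).2) _
        (CX.comp_mem _ hE.2 _ (CX.trans_mem _ (hf' _ hE.1).2)))
      rintro _ ⟨p, hp, rfl⟩
      refine ⟨f p.2.val, ⟨(p.2.val, p.1.val), ⟨(p.2, p.1), hp, rfl⟩, rfl⟩,
        f' p.1.val, ⟨(p.2, p.1), hp, rfl⟩,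
        ⟨(p.2.val, p.1.val), ⟨(p.2, p.1), hp, rfl⟩, rfl⟩⟩
  · -- subset
    intro E hE E' hsub
    exact ⟨CY.subset_mem _ hE.1 _ (Set.image_mono hsub),
      CX.subset_mem _ hE.2 _ (Set.image_mono hsub)⟩
  · -- singleton
    intro x
    constructor
    · rw [Set.image_singleton]; exact CY.singleton_mem x.val
    · rw [Set.image_singleton]; exact x.2
  · -- inclusion coarse
    intro F hF
    exact ⟨⟨CY.proper _ hF.1, fun K hK => finite_sep _ hι2 F hK⟩, hF.1⟩
  · -- universal property
    intro Z CZ g hg hclose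
    have hmem : ∀ z, ({(f (g z), f' (g z))} : Set (X × X)) ∈ CX.ents := by
      intro z
      have := hclose {(z, z)} (CZ.singleton_mem z)
      rwa [prodImage, Set.image_singleton] at this
    refine ⟨hmem, ?_, rfl, ?_⟩
    · -- corestriction coarse
      intro F hF
      have key1 : Prod.map (Subtype.val : EqSet CX f f' → Y) Subtype.val ''
          (Prod.map (fun z => (⟨g z, hmem z⟩ : EqSet CX f f'))
            (fun z => (⟨g z, hmem z⟩ : EqSet CX f f')) '' F) = Prod.map g g '' F := by
        rw [Set.image_image]; rfl
      have key2 : (fun p : EqSet CX f f' × EqSet CX f f' => (f p.1.val, f' p.2.val)) ''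
          (Prod.map (fun z => (⟨g z, hmem z⟩ : EqSet CX f f'))
            (fun z => (⟨g z, hmem z⟩ : EqSet CX f f')) '' F)
          = prodImage (f ∘ g) (f' ∘ g) F := by
        rw [prodImage, Set.image_image]; rfl
      refine ⟨⟨?_, ?_⟩, key1 ▸ (hg F hF).2, key2 ▸ hclose F hF⟩
      · exact properAx_of_image _ hι (key1 ▸ CY.proper _ (hg F hF).2)
      · intro K hK
        refine ((hg F hF).1.2 (Prod.map Subtype.val Subtype.val '' K)
          (hK.image _)).subset ?_
        rintro p ⟨hpF, hpK⟩
        exact ⟨hpF, ⟨_, hpK, rfl⟩⟩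
    · -- uniqueness up to closeness
      intro g' hg' hclose' F hF
      have hΔ : rcomp (rtrans F) F ∈ CZ.ents := CZ.comp_mem _ (CZ.trans_mem _ hF) _ hF
      have hH2 : Prod.map f' f' ''
          (prodImage (Subtype.val ∘ g') g (rcomp (rtrans F) F)) ∈ CX.ents :=
        (hf' _ (hclose' _ hΔ)).2
      have hH1 : (fun p : EqSet CX f f' × EqSet CX f f' => (f p.1.val, f' p.2.val)) ''
          (Prod.map g' g' '' F) ∈ CX.ents := ((hg' F hF).2).2
      constructor
      · have : Prod.map (Subtype.val : EqSet CX f f' → Y) Subtype.val ''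
            prodImage g' (fun z => ⟨g z, hmem z⟩) F
            = prodImage (Subtype.val ∘ g') g F := by
          rw [prodImage, prodImage, Set.image_image]; rfl
        rw [this]; exact hclose' F hF
      · rw [prodImage, Set.image_image]
        apply CX.subset_mem _ (CX.comp_mem _ hH1 _ hH2)
        rintro _ ⟨⟨z, z'⟩, hq, rfl⟩
        refine ⟨f' (g' z').val, ?_, ?_⟩
        · exact ⟨Prod.map g' g' (z, z'), ⟨(z, z'), hq, rfl⟩, rfl⟩
        · exact ⟨((g' z').val, g z'), ⟨(z', z'), ⟨z, hq, hq⟩, rfl⟩, rfl⟩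
end

section
/- Let f, f' : Y → X be close coarse maps between coarse spaces. Then the coarsely invariant pull-backs agree: 𝓔_{Terminate(Y)} ∩ f*𝓔_X = 𝓔_{Terminate(Y)} ∩ f'*𝓔_X, where f*𝓔_X denotes the pull-back coarse structure along f. -/
open Set

universe u v w

/-- The coarse structure of `Terminate(Y)`: sets satisfying the properness axiom
whose left and right supports are unital subspaces of `Y`. -/
def TerminateEnts {Y : Type u} (CY : CoarseStructure Y) : Set (Set (Y × Y)) :=
  {F | ProperAx F ∧ runit (leftSupp F) ∈ CY.ents ∧ runit (rightSupp F) ∈ CY.ents}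

/-- The pull-back coarse structure along `f`. -/
def pullbackEnts {Y : Type u} {X : Type v} (f : Y → X) (CX : CoarseStructure X) :
    Set (Set (Y × Y)) :=
  {F | ProperAx F ∧ LocProperFor f F ∧ Prod.map f f '' F ∈ CX.ents}

lemma close_symm {Y : Type u} {X : Type v} (CY : CoarseStructure Y) (CX : CoarseStructure X)
    (f f' : Y → X) (hclose : Close CY CX f f') : Close CY CX f' f := by
  intro F hF
  have h1 : prodImage f f' (rtrans F) ∈ CX.ents := hclose _ (CY.trans_mem F hF)
  have h2 : prodImage f' f F = rtrans (prodImage f f' (rtrans F)) := by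
    ext ⟨a, b⟩
    constructor
    · rintro ⟨⟨y, y'⟩, hy, h⟩
      rw [← h]
      exact ⟨(y', y), hy, rfl⟩
    · rintro ⟨⟨y', y⟩, hy, h⟩
      refine ⟨(y, y'), hy, ?_⟩
      simp only [Prod.ext_iff] at h ⊢
      exact ⟨h.2, h.1⟩
  rw [h2]
  exact CX.trans_mem _ h1

lemma key_lemma {Y : Type u} {X : Type v} (CY : CoarseStructure Y) (CX : CoarseStructure X)
    (f f' : Y → X) (hf' : IsCoarseMap CY CX f') (hclose : Close CY CX f f')
    (F : Set (Y × Y)) (hT : F ∈ TerminateEnts CY) (hP : F ∈ pullbackEnts f CX) :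
    F ∈ pullbackEnts f' CX := by
  obtain ⟨hAx, hL, hR⟩ := hT
  obtain ⟨-, hlp, hBf⟩ := hP
  set L := runit (leftSupp F) with hLdef
  set R := runit (rightSupp F) with hRdef
  -- entourage membership
  have hA : prodImage f f' L ∈ CX.ents := hclose L hL
  have hC : prodImage f f' R ∈ CX.ents := hclose R hR
  have hE : rcomp (rtrans (prodImage f f' L)) (rcomp (Prod.map f f '' F) (prodImage f f' R))
      ∈ CX.ents :=
    CX.comp_mem _ (CX.trans_mem _ hA) _ (CX.comp_mem _ hBf _ hC)
  have hsub : Prod.map f' f' '' F ⊆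
      rcomp (rtrans (prodImage f f' L)) (rcomp (Prod.map f f '' F) (prodImage f f' R)) := by
    rintro p ⟨q, hq, rfl⟩
    refine ⟨f q.1, ?_, f q.2, ⟨q, hq, rfl⟩, ?_⟩
    · exact ⟨(q.1, q.1), ⟨⟨q, hq, rfl⟩, rfl⟩, rfl⟩
    · exact ⟨(q.2, q.2), ⟨⟨q, hq, rfl⟩, rfl⟩, rfl⟩
  have hmem : Prod.map f' f' '' F ∈ CX.ents := CX.subset_mem _ hE _ hsub
  refine ⟨hAx, ⟨CX.proper _ hmem, ?_⟩, hmem⟩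
  -- local properness of f' for F
  intro K hK
  have hLp : LocProperFor f' L := (hf' L hL).1
  have hK1 : (Prod.fst '' K).Finite := hK.image _
  have hS : {q ∈ L | Prod.map f' f' q ∈ (Prod.fst '' K) ×ˢ (Prod.fst '' K)}.Finite :=
    hLp.2 _ (hK1.prod hK1)
  set S1 := Prod.fst '' {q ∈ L | Prod.map f' f' q ∈ (Prod.fst '' K) ×ˢ (Prod.fst '' K)} with hS1
  have hS1fin : S1.Finite := hS.image _
  have htarget : {p ∈ F | Prod.map f' f' p ∈ K} ⊆ {e ∈ F | e.1 ∈ S1} := by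
    rintro ⟨y, y'⟩ ⟨hpF, hpK⟩
    refine ⟨hpF, ⟨(y, y), ⟨⟨⟨(y, y'), hpF, rfl⟩, rfl⟩, ?_⟩, rfl⟩⟩
    exact ⟨⟨(f' y, f' y'), hpK, rfl⟩, ⟨(f' y, f' y'), hpK, rfl⟩⟩
  exact ((hAx S1 hS1fin).1).subset htarget

/-- Close coarse maps have the same coarsely invariant pull-back coarse structure. -/
theorem stmt17 {Y : Type u} {X : Type v} (CY : CoarseStructure Y) (CX : CoarseStructure X)
    (f f' : Y → X) (hf : IsCoarseMap CY CX f) (hf' : IsCoarseMap CY CX f')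
    (hclose : Close CY CX f f') :
    TerminateEnts CY ∩ pullbackEnts f CX = TerminateEnts CY ∩ pullbackEnts f' CX := by
  ext F
  constructor
  · rintro ⟨hT, hP⟩
    exact ⟨hT, key_lemma CY CX f f' hf' hclose F hT hP⟩
  · rintro ⟨hT, hP⟩
    exact ⟨hT, key_lemma CY CX f' f hf (close_symm CY CX f f' hclose) F hT hP⟩
end

section
/- Let f, f' : Y → X be close coarse maps between coarse spaces. Then the ideals of 𝓔_X generated by the push-forwards agree: ⟪{(f × f)(F) : F ∈ 𝓔_Y}⟫_X = ⟪{(f' × f')(F) : F ∈ 𝓔_Y}⟫_X, where ⟪𝓔'⟫_X denotes the smallest ideal of 𝓔_X containing 𝓔'. -/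
open Set

universe u v w

/-- A collection of subsets of `X × X` is a coarse structure. -/
def IsCoarseStructureSet {X : Type u} (E : Set (Set (X × X))) : Prop :=
  (∀ F ∈ E, ProperAx F) ∧ (∀ F ∈ E, ∀ F' ∈ E, F ∪ F' ∈ E) ∧
  (∀ F ∈ E, ∀ F' ∈ E, rcomp F F' ∈ E) ∧ (∀ F ∈ E, rtrans F ∈ E) ∧
  (∀ F ∈ E, ∀ F' ⊆ F, F' ∈ E) ∧ (∀ x : X, ({(x, x)} : Set (X × X)) ∈ E)

/-- An ideal of a coarse structure. -/
def IsIdeal {X : Type u} (CX : CoarseStructure X) (I : Set (Set (X × X))) : Prop :=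
  I ⊆ CX.ents ∧ IsCoarseStructureSet I ∧
  ∀ F ∈ I, ∀ F' ∈ CX.ents, rcomp F F' ∈ I ∧ rcomp F' F ∈ I

/-- The smallest ideal of `CX` containing `S`. -/
def idealGen {X : Type u} (CX : CoarseStructure X) (S : Set (Set (X × X))) :
    Set (Set (X × X)) :=
  ⋂₀ {I | IsIdeal CX I ∧ S ⊆ I}

lemma prodImage_swap {Y : Type u} {X : Type v} (f f' : Y → X) (F : Set (Y × Y)) :
    prodImage f' f F = rtrans (prodImage f f' (rtrans F)) := by
  ext ⟨a, b⟩
  constructor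
  · rintro ⟨⟨y, y'⟩, h, hh⟩
    obtain ⟨rfl, rfl⟩ := Prod.mk.injEq .. ▸ hh
    exact ⟨⟨y', y⟩, h, rfl⟩
  · rintro ⟨⟨y, y'⟩, h, hh⟩
    obtain ⟨rfl, rfl⟩ := Prod.mk.injEq .. ▸ hh
    exact ⟨⟨y', y⟩, h, rfl⟩

lemma key_sub {Y : Type u} {X : Type v} (CY : CoarseStructure Y) (CX : CoarseStructure X)
    (f f' : Y → X) (hclose : Close CY CX f f')
    (I : Set (Set (X × X))) (hI : IsIdeal CX I)
    (hS : {E | ∃ F ∈ CY.ents, E = Prod.map f' f' '' F} ⊆ I) :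
    {E | ∃ F ∈ CY.ents, E = Prod.map f f '' F} ⊆ I := by
  rintro E ⟨F, hF, rfl⟩
  -- diagonal over left/right supports
  have hD1 : runit (leftSupp F) ∈ CY.ents := by
    apply CY.subset_mem _ (CY.comp_mem F hF (rtrans F) (CY.trans_mem F hF))
    rintro ⟨a, b⟩ ⟨⟨⟨y, y'⟩, hy, rfl⟩, h2⟩
    cases h2; exact ⟨y', hy, hy⟩
  have hD2 : runit (rightSupp F) ∈ CY.ents := by
    apply CY.subset_mem _ (CY.comp_mem (rtrans F) (CY.trans_mem F hF) F hF)
    rintro ⟨a, b⟩ ⟨⟨⟨y, y'⟩, hy, rfl⟩, h2⟩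
    cases h2; exact ⟨y, hy, hy⟩
  have hE1 : prodImage f f' (runit (leftSupp F)) ∈ CX.ents := hclose _ hD1
  have hE2 : prodImage f' f (runit (rightSupp F)) ∈ CX.ents :=
    close_symm CY CX f f' hclose _ hD2
  have hA : Prod.map f' f' '' F ∈ I := hS ⟨F, hF, rfl⟩
  have hB : rcomp (prodImage f f' (runit (leftSupp F))) (Prod.map f' f' '' F) ∈ I :=
    (hI.2.2 _ hA _ hE1).2
  have hC : rcomp (rcomp (prodImage f f' (runit (leftSupp F))) (Prod.map f' f' '' F))
      (prodImage f' f (runit (rightSupp F))) ∈ I := (hI.2.2 _ hB _ hE2).1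
  apply hI.2.1.2.2.2.2.1 _ hC
  rintro ⟨a, b⟩ ⟨⟨y, y'⟩, hyy, hh⟩
  obtain ⟨rfl, rfl⟩ := Prod.mk.injEq .. ▸ hh
  refine ⟨f' y', ⟨f' y, ?_, ?_⟩, ?_⟩
  · exact ⟨⟨y, y⟩, ⟨⟨⟨y, y'⟩, hyy, rfl⟩, rfl⟩, rfl⟩
  · exact ⟨⟨y, y'⟩, hyy, rfl⟩
  · exact ⟨⟨y', y'⟩, ⟨⟨⟨y, y'⟩, hyy, rfl⟩, rfl⟩, rfl⟩

/-- Close coarse maps generate the same ideal of push-forward entourages. -/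
theorem stmt18 {Y : Type u} {X : Type v} (CY : CoarseStructure Y) (CX : CoarseStructure X)
    (f f' : Y → X) (hf : IsCoarseMap CY CX f) (hf' : IsCoarseMap CY CX f')
    (hclose : Close CY CX f f') :
    idealGen CX {E | ∃ F ∈ CY.ents, E = Prod.map f f '' F} =
      idealGen CX {E | ∃ F ∈ CY.ents, E = Prod.map f' f' '' F} := by
  apply subset_antisymm
  · intro E hE I hI
    exact hE I ⟨hI.1, key_sub CY CX f f' hclose I hI.1 hI.2⟩
  · intro E hE I hI
    exact hE I ⟨hI.1, key_sub CY CX f' f (close_symm CY CX f f' hclose) I hI.1 hI.2⟩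
end
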